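/- For integers n ≥ 2, m ≥ 1, and q_{2k} = 1/(2k+2n), setting d_k = q_{2k}/N(k) where N(k) = (2k+n-1)(k+n-2)!/(k!(n-1)!), one has the asymptotic q_{2k+2m}/q_{2k} - d_k/d_{k-m} = (n-1)m/k + O(1/k²) as k → ∞. -/

import Mathlib

open Filter Asymptotics Finset

/-- `asym f a` means `f k = 1 - a/k + O(1/k²)`. -/
private def asym (f : ℕ → ℝ) (a : ℝ) : Prop :=
  (fun k : ℕ => f k - (1 - a / k)) =O[atTop] fun k : ℕ => 1 / (k : ℝ) ^ 2

private lemma asym_ratio (c e : ℝ) :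
    asym (fun k : ℕ => ((k : ℝ) + c) / ((k : ℝ) + c + e)) e := by
  rw [asym, isBigO_iff]
  refine ⟨2 * |e * (c + e)|, ?_⟩
  filter_upwards [eventually_ge_atTop (⌈2 * |c + e|⌉₊ + 1)] with k hk
  simp only [Real.norm_eq_abs]
  have hk1 : (1 : ℝ) ≤ (k : ℝ) := by
    have : (1 : ℕ) ≤ k := le_trans (by omega) hk
    exact_mod_cast this
  have hk2 : 2 * |c + e| ≤ (k : ℝ) := by
    have h1 : (⌈2 * |c + e|⌉₊ : ℝ) ≤ (k : ℝ) := by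
      exact_mod_cast le_trans (Nat.le_succ _) hk
    exact le_trans (Nat.le_ceil _) h1
  have habs := neg_abs_le (c + e)
  have habs2 := abs_nonneg (c + e)
  have hden : (k : ℝ) / 2 ≤ (k : ℝ) + c + e := by linarith
  have hkpos : (0 : ℝ) < (k : ℝ) := by linarith
  have hdenpos : (0 : ℝ) < (k : ℝ) + c + e := by linarith
  have heq : ((k : ℝ) + c) / ((k : ℝ) + c + e) - (1 - e / (k : ℝ))
      = e * (c + e) / ((k : ℝ) * ((k : ℝ) + c + e)) := by
    field_simp
    ring
  rw [heq, abs_div, abs_of_pos (show (0:ℝ) < (k : ℝ) * ((k : ℝ) + c + e) by positivity)]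
  have h3 : (k : ℝ) * ((k : ℝ) / 2) ≤ (k : ℝ) * ((k : ℝ) + c + e) := by nlinarith
  calc |e * (c + e)| / ((k : ℝ) * ((k : ℝ) + c + e))
      ≤ |e * (c + e)| / ((k : ℝ) * ((k : ℝ) / 2)) := by
        gcongr
    _ = 2 * |e * (c + e)| * |1 / (k : ℝ) ^ 2| := by
        rw [abs_of_pos (show (0:ℝ) < 1 / (k : ℝ) ^ 2 by positivity)]
        field_simp

private lemma asym_bigO_one {f : ℕ → ℝ} {a : ℝ} (h : asym f a) :
    f =O[atTop] fun _ : ℕ => (1 : ℝ) := by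
  have h2 : (fun k : ℕ => 1 / (k : ℝ) ^ 2) =O[atTop] (fun _ : ℕ => (1 : ℝ)) := by
    rw [isBigO_iff]
    refine ⟨1, ?_⟩
    filter_upwards [eventually_ge_atTop 1] with k hk
    simp only [Real.norm_eq_abs]
    have hk1 : (1 : ℝ) ≤ (k : ℝ) := by exact_mod_cast hk
    rw [abs_of_pos (show (0:ℝ) < 1 / (k : ℝ) ^ 2 by positivity)]
    rw [div_le_iff₀ (by positivity)]
    simp only [abs_one]
    nlinarith
  have h3 : (fun k : ℕ => (1 : ℝ) - a / (k : ℝ)) =O[atTop] (fun _ : ℕ => (1 : ℝ)) := by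
    rw [isBigO_iff]
    refine ⟨1 + |a|, ?_⟩
    filter_upwards [eventually_ge_atTop 1] with k hk
    simp only [Real.norm_eq_abs]
    have hk1 : (1 : ℝ) ≤ (k : ℝ) := by exact_mod_cast hk
    have hkpos : (0 : ℝ) < (k : ℝ) := by linarith
    have hle : |a / (k : ℝ)| ≤ |a| := by
      rw [abs_div, abs_of_pos hkpos]
      exact div_le_self (abs_nonneg _) hk1
    have h4 : |1 - a / (k : ℝ)| ≤ 1 + |a| := by
      rw [sub_eq_add_neg]
      refine (abs_add_le _ _).trans ?_
      rw [abs_neg, abs_one]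
      linarith
    calc |1 - a / (k : ℝ)| ≤ 1 + |a| := h4
      _ = (1 + |a|) * |(1:ℝ)| := by simp
  have := (h.trans h2).add h3
  refine this.congr (fun k => ?_) (fun k => rfl)
  ring

private lemma asym_mul {f g : ℕ → ℝ} {a b : ℝ} (hf : asym f a) (hg : asym g b) :
    asym (fun k => f k * g k) (a + b) := by
  have hfo := asym_bigO_one hf
  have hb : (fun k : ℕ => (1 : ℝ) - b / (k : ℝ)) =O[atTop] (fun _ : ℕ => (1 : ℝ)) := by
    have : asym (fun k : ℕ => (1 : ℝ) - b / (k : ℝ)) b := by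
      rw [asym]
      simpa using isBigO_zero _ _
    exact asym_bigO_one this
  have h1 : (fun k : ℕ => f k * (g k - (1 - b / (k : ℝ)))) =O[atTop]
      fun k : ℕ => 1 / (k : ℝ) ^ 2 := by
    simpa using hfo.mul hg
  have h2 : (fun k : ℕ => (1 - b / (k : ℝ)) * (f k - (1 - a / (k : ℝ)))) =O[atTop]
      fun k : ℕ => 1 / (k : ℝ) ^ 2 := by
    simpa using hb.mul hf
  have h3 : (fun k : ℕ => a * b / (k : ℝ) ^ 2) =O[atTop] fun k : ℕ => 1 / (k : ℝ) ^ 2 := by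
    refine ((isBigO_refl (fun k : ℕ => 1 / (k : ℝ) ^ 2) atTop).const_mul_left (a * b)).congr
      (fun k => ?_) (fun k => rfl)
    ring
  rw [asym]
  refine ((h1.add h2).add h3).congr (fun k => ?_) (fun k => rfl)
  ring

private lemma asym_prod (c : ℝ) (j : ℕ) :
    asym (fun k : ℕ => ∏ i ∈ range j, (((k : ℝ) - i) / (((k : ℝ) - i) + c))) (j * c) := by
  induction j with
  | zero =>
      rw [asym]
      simp only [range_zero, prod_empty, Nat.cast_zero, zero_mul, zero_div, sub_zero, sub_self]
      exact isBigO_zero _ _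
  | succ j ih =>
      have h := asym_mul ih (asym_ratio (-(j : ℝ)) c)
      rw [asym] at h ⊢
      refine h.congr (fun k => ?_) (fun k => rfl)
      rw [prod_range_succ]
      push_cast
      simp only [← sub_eq_add_neg]
      ring

set_option maxHeartbeats 1000000 in
/-- `q k` stands for the moment `q_{2k} = 1/(2k+2n)`. -/
theorem stmt_13 (n m : ℕ) (hn : 2 ≤ n) (hm : 1 ≤ m)
    (q N d : ℕ → ℝ)
    (hq : ∀ k, q k = 1 / (2 * k + 2 * n))
    (hN : ∀ k, N k = (2 * k + n - 1 : ℝ) * (k + n - 2).factorial /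
      (k.factorial * (n - 1).factorial))
    (hd : ∀ k, d k = q k / N k) :
    (fun k : ℕ => q (k + m) / q k - d k / d (k - m) - ((n : ℝ) - 1) * m / k)
      =O[atTop] fun k : ℕ => 1 / (k : ℝ) ^ 2 := by
  have hn2 : (2 : ℝ) ≤ (n : ℝ) := by exact_mod_cast hn
  have hm1 : (1 : ℝ) ≤ (m : ℝ) := by exact_mod_cast hm
  set F : ℕ → ℝ := fun k => ((k : ℝ) + n) / ((k : ℝ) + n + m) with hF_def
  set G1 : ℕ → ℝ := fun k => ((k : ℝ) + ((n : ℝ) - m)) / ((k : ℝ) + ((n : ℝ) - m) + m)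
    with hG1_def
  set G2 : ℕ → ℝ := fun k =>
    ((k : ℝ) + (((n : ℝ) - 1) / 2 - m)) / ((k : ℝ) + (((n : ℝ) - 1) / 2 - m) + m) with hG2_def
  set P : ℕ → ℝ := fun k => ∏ i ∈ range m, (((k : ℝ) - i) / (((k : ℝ) - i) + ((n : ℝ) - 2)))
    with hP_def
  have hF : asym F (m : ℝ) := asym_ratio _ _
  have hG : asym (fun k => (G1 k * G2 k) * P k) ((m : ℝ) + m + m * ((n : ℝ) - 2)) :=
    asym_mul (asym_mul (asym_ratio _ _) (asym_ratio _ _)) (asym_prod _ _)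
  -- explicit formula for q (k+m) / q k
  have hFeq : ∀ k : ℕ, q (k + m) / q k = F k := by
    intro k
    rw [hq, hq, hF_def]
    have h1 : (0 : ℝ) < 2 * ((k : ℝ) + m) + 2 * n := by positivity
    have h2 : (0 : ℝ) < 2 * (k : ℝ) + 2 * n := by positivity
    have h3 : (0 : ℝ) < (k : ℝ) + n + m := by positivity
    push_cast
    field_simp
    ring
  -- explicit formula for d k / d (k - m)
  have hGeq : ∀ k : ℕ, m ≤ k → d k / d (k - m) = G1 k * G2 k * P k := by
    intro k hkm
    have hkm' : (m : ℝ) ≤ (k : ℝ) := by exact_mod_cast hkm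
    have hAcast : ((k - m : ℕ) : ℝ) = (k : ℝ) - m := by rw [Nat.cast_sub hkm]
    have hf1 : (k.factorial : ℝ) = ((k - m).factorial : ℝ) * (k.descFactorial m : ℝ) := by
      exact_mod_cast (Nat.factorial_mul_descFactorial hkm).symm
    have hmn : m ≤ k + n - 2 := by omega
    have hf2 : ((k + n - 2).factorial : ℝ)
        = ((k - m + n - 2).factorial : ℝ) * ((k + n - 2).descFactorial m : ℝ) := by
      have h := Nat.factorial_mul_descFactorial hmn
      have h2 : k + n - 2 - m = k - m + n - 2 := by omega
      rw [h2] at h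
      exact_mod_cast h.symm
    have hd1 : (k.descFactorial m : ℝ) = ∏ i ∈ range m, ((k : ℝ) - i) := by
      rw [Nat.descFactorial_eq_prod_range, Nat.cast_prod]
      refine Finset.prod_congr rfl fun i hi => ?_
      have hik : i ≤ k := by have := mem_range.mp hi; omega
      rw [Nat.cast_sub hik]
    have hd2 : ((k + n - 2).descFactorial m : ℝ) = ∏ i ∈ range m, ((k : ℝ) + n - 2 - i) := by
      rw [Nat.descFactorial_eq_prod_range, Nat.cast_prod]
      refine Finset.prod_congr rfl fun i hi => ?_
      have h1 : i ≤ k + n - 2 := by have := mem_range.mp hi; omega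
      rw [Nat.cast_sub h1]
      have h2 : ((k + n - 2 : ℕ) : ℝ) = (k : ℝ) + n - 2 := by
        have h3 : 2 ≤ k + n := by omega
        rw [Nat.cast_sub h3, Nat.cast_add]
        norm_num
      rw [h2]
    have hPk : P k = (∏ i ∈ range m, ((k : ℝ) - i)) / (∏ i ∈ range m, ((k : ℝ) + n - 2 - i)) := by
      simp only [hP_def]
      rw [prod_div_distrib]
      congr 1
      exact prod_congr rfl fun i _ => by ring
    -- nonzero facts
    have hD1 : (0 : ℝ) < ∏ i ∈ range m, ((k : ℝ) - i) := by
      refine prod_pos fun i hi => ?_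
      have h1 : (i : ℝ) < (k : ℝ) := by
        exact_mod_cast lt_of_lt_of_le (mem_range.mp hi) hkm
      linarith
    have hD2 : (0 : ℝ) < ∏ i ∈ range m, ((k : ℝ) + n - 2 - i) := by
      refine prod_pos fun i hi => ?_
      have h1 : (i : ℝ) < (k : ℝ) := by
        exact_mod_cast lt_of_lt_of_le (mem_range.mp hi) hkm
      linarith
    have hA1 : (0 : ℝ) < ((k - m).factorial : ℝ) := by
      exact_mod_cast (k - m).factorial_pos
    have hA2 : (0 : ℝ) < ((k - m + n - 2).factorial : ℝ) := by
      exact_mod_cast (k - m + n - 2).factorial_pos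
    have hA3 : (0 : ℝ) < ((n - 1).factorial : ℝ) := by
      exact_mod_cast (n - 1).factorial_pos
    have hc1 : (0 : ℝ) < 2 * (k : ℝ) + 2 * n := by positivity
    have hc2 : (0 : ℝ) < 2 * ((k : ℝ) - m) + 2 * n := by linarith
    have hc3 : (0 : ℝ) < 2 * (k : ℝ) + n - 1 := by linarith [Nat.cast_nonneg (α := ℝ) k]
    have hc4 : (0 : ℝ) < 2 * ((k : ℝ) - m) + n - 1 := by linarith
    have hg1d : ((k : ℝ) + ((n : ℝ) - m) + m) ≠ 0 := by
      have : (0 : ℝ) < (k : ℝ) + n := by positivity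
      intro h; apply this.ne'; linarith
    have hg2d : ((k : ℝ) + (((n : ℝ) - 1) / 2 - m) + m) ≠ 0 := by
      have h0 : (0 : ℝ) ≤ (k : ℝ) := Nat.cast_nonneg k
      intro h
      have : (k : ℝ) + ((n : ℝ) - 1) / 2 = 0 := by linarith
      nlinarith
    have hqk : q k = 1 / (2 * (k : ℝ) + 2 * n) := hq k
    have hqA : q (k - m) = 1 / (2 * ((k : ℝ) - m) + 2 * n) := by rw [hq, hAcast]
    have hNk : N k = (2 * (k : ℝ) + n - 1) * (((k - m + n - 2).factorial : ℝ)
        * ∏ i ∈ range m, ((k : ℝ) + n - 2 - i))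
        / ((((k - m).factorial : ℝ) * ∏ i ∈ range m, ((k : ℝ) - i)) * ((n - 1).factorial : ℝ)) := by
      rw [hN, hf1, hf2, hd1, hd2]
    have hNA : N (k - m) = (2 * ((k : ℝ) - m) + n - 1) * ((k - m + n - 2).factorial : ℝ)
        / (((k - m).factorial : ℝ) * ((n - 1).factorial : ℝ)) := by
      rw [hN, hAcast]
    have hG2k : G2 k = (2 * ((k : ℝ) - m) + n - 1) / (2 * (k : ℝ) + n - 1) := by
      simp only [hG2_def]
      rw [div_eq_div_iff hg2d hc3.ne']
      ring
    have e1 : q k / q (k - m) = G1 k := by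
      rw [hqk, hqA, hG1_def]
      field_simp
      ring
    have hNkpos : 0 < N k := by
      rw [hNk]
      exact div_pos (mul_pos hc3 (mul_pos hA2 hD2)) (mul_pos (mul_pos hA1 hD1) hA3)
    have e2' : N (k - m) = (G2 k * P k) * N k := by
      rw [hNk, hNA, hG2k, hPk]
      generalize (((k - m).factorial : ℝ)) = a1 at hA1 ⊢
      generalize (((k - m + n - 2).factorial : ℝ)) = a2 at hA2 ⊢
      generalize (((n - 1).factorial : ℝ)) = a3 at hA3 ⊢
      generalize (∏ i ∈ range m, ((k : ℝ) - i)) = b1 at hD1 ⊢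
      generalize (∏ i ∈ range m, ((k : ℝ) + n - 2 - i)) = b2 at hD2 ⊢
      field_simp
    have e2 : N (k - m) / N k = G2 k * P k := by
      rw [e2', mul_div_assoc, div_self hNkpos.ne', mul_one]
    calc d k / d (k - m) = (q k / q (k - m)) * (N (k - m) / N k) := by
          rw [hd, hd]
          rw [div_div_div_comm, div_eq_mul_inv (q k / q (k - m)), inv_div]
      _ = G1 k * (G2 k * P k) := by rw [e1, e2]
      _ = G1 k * G2 k * P k := by ring
  have hEq : (fun k : ℕ => q (k + m) / q k - d k / d (k - m) - ((n : ℝ) - 1) * m / k)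
      =ᶠ[atTop] fun k : ℕ => (F k - (1 - (m : ℝ) / k))
        - ((G1 k * G2 k * P k) - (1 - ((m : ℝ) + m + m * ((n : ℝ) - 2)) / k)) := by
    filter_upwards [eventually_ge_atTop m] with k hk
    rw [hFeq k, hGeq k hk]
    ring
  rw [asym] at hF hG
  exact (hF.sub hG).congr' hEq.symm EventuallyEq.rfl
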